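/- For nonnegative integers a, b, c, the number of lozenge tilings of a hexagon with side lengths a, b, c, a, b, c (equivalently, plane partitions in an a×b×c box) equals H(a)H(b)H(c)H(a+b+c)/(H(a+b)H(a+c)H(b+c)), where H(n) = ∏_{k=1}^n (k-1)!. -/

import Mathlib

/-- `H(n) = ∏_{k=1}^n (k-1)!`. -/
def hyperH (n : ℕ) : ℕ := ∏ k ∈ Finset.range n, Nat.factorial k

namespace MacMahonAux

open Finset Nat

/-! ### chooseZ : binomial coefficient with integer lower index -/

def chooseZ (n : ℕ) (x : ℤ) : ℕ := if 0 ≤ x then n.choose x.toNat else 0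

lemma chooseZ_ofNat (n m : ℕ) : chooseZ n (m : ℤ) = n.choose m := by
  simp [chooseZ]

lemma chooseZ_neg {n : ℕ} {x : ℤ} (h : x < 0) : chooseZ n x = 0 := by
  simp [chooseZ, not_le.2 h]

lemma chooseZ_zero_left (x : ℤ) : chooseZ 0 x = if x = 0 then 1 else 0 := by
  unfold chooseZ
  by_cases h : 0 ≤ x
  · rcases Int.eq_ofNat_of_zero_le h with ⟨m, rfl⟩
    cases m with
    | zero => simp
    | succ k =>
      simp [Nat.choose]
      omega
  · rw [if_neg h, if_neg (by omega)]

lemma chooseZ_succ (n : ℕ) (x : ℤ) :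
    chooseZ (n + 1) x = chooseZ n x + chooseZ n (x - 1) := by
  by_cases h : 0 ≤ x
  · rcases Int.eq_ofNat_of_zero_le h with ⟨m, rfl⟩
    cases m with
    | zero =>
      have h1 : ((0 : ℕ) : ℤ) - 1 < 0 := by omega
      rw [chooseZ_neg h1]
      simp [chooseZ]
    | succ m =>
      have h1 : ((m + 1 : ℕ) : ℤ) - 1 = ((m : ℕ) : ℤ) := by push_cast; ring
      rw [h1, chooseZ_ofNat, chooseZ_ofNat, chooseZ_ofNat, Nat.choose_succ_succ]
      ring
  · rw [chooseZ_neg (by omega), chooseZ_neg (by omega), chooseZ_neg (by omega)]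

/-- Vandermonde convolution for `chooseZ`. -/
lemma chooseZ_add (n m : ℕ) (x : ℤ) :
    chooseZ (n + m) x = ∑ s ∈ range (m + 1), m.choose s * chooseZ n (x - s) := by
  induction m generalizing x with
  | zero => simp
  | succ m ih =>
    have h1 : n + (m + 1) = (n + m) + 1 := rfl
    rw [h1, chooseZ_succ, ih, ih]
    rw [Finset.sum_range_succ' (fun s => (m + 1).choose s * chooseZ n (x - s)) (m + 1)]
    simp only [Nat.choose_succ_succ, Nat.choose_zero_right, one_mul, add_mul,
      Nat.cast_zero, sub_zero]
    rw [Finset.sum_add_distrib]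
    have hC : (∑ s ∈ range (m + 1), (m.choose s) * chooseZ n (x - 1 - (s : ℤ))) =
        ∑ s ∈ range (m + 1), (m.choose s) * chooseZ n (x - ((s + 1 : ℕ) : ℤ)) := by
      refine Finset.sum_congr rfl fun s _ => ?_
      congr 2
      push_cast
      ring
    have hE : (∑ s ∈ range (m + 1), (m.choose s.succ) * chooseZ n (x - ((s + 1 : ℕ) : ℤ))) =
        ∑ s ∈ range m, (m.choose (s + 1)) * chooseZ n (x - ((s + 1 : ℕ) : ℤ)) := by
      rw [Finset.sum_range_succ]
      simp
    rw [Finset.sum_range_succ' (fun s => m.choose s * chooseZ n (x - s)) m]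
    rw [hC, hE]
    simp only [Nat.choose_zero_right, one_mul, Nat.cast_zero, sub_zero]
    ring

lemma conj_core {N : ℕ} {α : Type*} [LinearOrder α] {x : Fin N → α}
    (hx : Antitone x) (i : Fin N) (v : α) :
    v < x i ↔ (i : ℕ) < #(univ.filter fun i' => v < x i') := by
  constructor
  · intro h
    have hsub : Finset.Iic i ⊆ univ.filter fun i' => v < x i' := by
      intro i' hi'
      simp only [Finset.mem_Iic] at hi'
      simp only [Finset.mem_filter, Finset.mem_univ, true_and]
      exact lt_of_lt_of_le h (hx hi')
    calc (i : ℕ) < (i : ℕ) + 1 := Nat.lt_succ_self _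
    _ = #(Finset.Iic i) := (Fin.card_Iic i).symm
    _ ≤ _ := Finset.card_le_card hsub
  · intro h
    by_contra hc
    push_neg at hc
    have hsub : (univ.filter fun i' => v < x i') ⊆ Finset.Iio i := by
      intro i' hi'
      simp only [Finset.mem_filter, Finset.mem_univ, true_and] at hi'
      simp only [Finset.mem_Iio]
      by_contra hge
      push_neg at hge
      exact absurd (lt_of_lt_of_le hi' (hx hge)) (not_lt.2 hc)
    have hcard := Finset.card_le_card hsub
    rw [Fin.card_Iio] at hcard
    omega

lemma card_filter_val_lt (N v : ℕ) :
    #(univ.filter fun k : Fin N => (k : ℕ) < v) = min v N := by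
  rcases le_total v N with h | h
  · rw [min_eq_left h]
    have himg : (univ.filter fun k : Fin N => (k : ℕ) < v).image Fin.val = range v := by
      ext m
      simp only [Finset.mem_image, Finset.mem_filter, Finset.mem_univ, true_and,
        Finset.mem_range]
      constructor
      · rintro ⟨k, hk, rfl⟩; exact hk
      · intro hm; exact ⟨⟨m, lt_of_lt_of_le hm h⟩, hm, rfl⟩
    have hcard := Finset.card_image_of_injective
      (univ.filter fun k : Fin N => (k : ℕ) < v) Fin.val_injective
    rw [himg, Finset.card_range] at hcard
    omega
  · rw [min_eq_right h]
    rw [Finset.filter_true_of_mem, Finset.card_univ, Fintype.card_fin]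
    intro k _
    exact lt_of_lt_of_le k.isLt h

/-! ### The count of lattice-path families, and its determinant formula -/

variable {b : ℕ}

def nxt (s : Fin b → ℤ) (ε : Fin b → Bool) : Fin b → ℤ :=
  fun j => s j - (if ε j then 1 else 0)

noncomputable def cnt (b : ℕ) : ℕ → (Fin b → ℤ) → (Fin b → ℤ) → ℕ
  | 0, s, e => if s = e then 1 else 0
  | n + 1, s, e =>
      ∑ ε : Fin b → Bool, if StrictAnti (nxt s ε) then cnt b n (nxt s ε) e else 0

/-- helper: StrictAnti on `Fin m` via adjacent comparisons -/
lemma strictAnti_fin_iff {m : ℕ} {α : Type*} [Preorder α] {v : Fin m → α} :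
    StrictAnti v ↔ ∀ (i : ℕ) (h : i + 1 < m), v ⟨i + 1, h⟩ < v ⟨i, Nat.lt_of_succ_lt h⟩ := by
  constructor
  · intro h i hi
    exact h (show (⟨i, Nat.lt_of_succ_lt hi⟩ : Fin m) < ⟨i + 1, hi⟩ from by
      simp [Fin.lt_def])
  · intro h
    rintro ⟨jv, hjv⟩ ⟨j'v, hj'v⟩ hjj
    have hlt : jv < j'v := hjj
    clear hjj
    induction j'v with
    | zero => omega
    | succ n ih =>
      rcases Nat.lt_or_ge jv n with h2 | h2
      · exact lt_trans (h n hj'v) (ih (Nat.lt_of_succ_lt hj'v) h2)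
      · have hje : jv = n := by omega
        subst hje
        exact h jv hj'v

lemma cnt_eq_det (n : ℕ) (s e : Fin b → ℤ) (hs : StrictAnti s) (he : StrictAnti e) :
    (cnt b n s e : ℤ) =
      Matrix.det (Matrix.of fun j k : Fin b => (chooseZ n (s j - e k) : ℤ)) := by
  induction n generalizing s with
  | zero =>
    have hent : ∀ j k : Fin b, (chooseZ 0 (s j - e k) : ℤ) = if s j = e k then 1 else 0 := by
      intro j k
      rw [chooseZ_zero_left]
      by_cases h : s j = e k <;> simp [h, sub_eq_zero]
    by_cases hse : s = e
    · subst hse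
      have hone : (Matrix.of fun j k : Fin b => (chooseZ 0 (s j - s k) : ℤ)) = 1 := by
        ext j k
        rw [Matrix.of_apply, Matrix.one_apply, hent]
        by_cases hjk : j = k
        · simp [hjk]
        · have hsne : s j ≠ s k := fun hh => hjk (hs.injective hh)
          simp [hjk, hsne]
      rw [hone, Matrix.det_one]
      simp [cnt]
    · rw [show cnt b 0 s e = if s = e then 1 else 0 from rfl, if_neg hse]
      by_cases hrow : ∀ j : Fin b, ∃ k, s j = e k
      · exfalso
        choose f hf using hrow
        have hinj : Function.Injective f := by
          intro j j' hjj
          apply hs.injective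
          rw [hf j, hf j', hjj]
        have hmono : StrictMono f := by
          intro j j' hlt
          have hlt2 : e (f j') < e (f j) := by
            rw [← hf j, ← hf j']
            exact hs hlt
          exact (he.lt_iff_gt).1 hlt2
        have hsurj : Function.Surjective f := Finite.surjective_of_injective hinj
        have hrange : Set.range f = Set.range (id : Fin b → Fin b) := by
          rw [Set.range_id]
          exact Set.range_eq_univ.2 hsurj
        have hid : f = id := (hmono.range_inj strictMono_id).1 hrange
        exact hse (funext fun j => by rw [hf j, hid]; rfl)
      · push_neg at hrow
        obtain ⟨j, hj⟩ := hrow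
        symm
        rw [show ((0 : ℕ) : ℤ) = 0 from rfl]
        apply Matrix.det_eq_zero_of_row_eq_zero j
        intro k
        rw [Matrix.of_apply, hent, if_neg (hj k)]
  | succ n ih =>
    have hent : ∀ j k : Fin b, (chooseZ (n + 1) (s j - e k) : ℤ)
        = (chooseZ n (s j - 1 - e k) : ℤ) + (chooseZ n (s j - 0 - e k) : ℤ) := by
      intro j k
      have harg : s j - e k - 1 = s j - 1 - e k := by ring
      rw [chooseZ_succ, harg]
      push_cast
      have harg2 : s j - 0 - e k = s j - e k := by ring
      rw [harg2]
      ring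
    set gRow : Fin b → Bool → (Fin b → ℤ) :=
      fun j x => fun k => (chooseZ n (s j - (if x then 1 else 0) - e k) : ℤ) with hgRow
    have hM : (Matrix.of fun j k : Fin b => (chooseZ (n + 1) (s j - e k) : ℤ)) =
        (fun j => ∑ x : Bool, gRow j x) := by
      funext j k
      simp only [Matrix.of_apply, Fintype.sum_bool, hgRow]
      rw [hent]
      simp
    rw [hM]
    have hdet : Matrix.det (fun j => ∑ x : Bool, gRow j x) =
        Matrix.detRowAlternating (R := ℤ) (n := Fin b) (fun j => ∑ x : Bool, gRow j x) := rfl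
    rw [hdet]
    have hexp := (Matrix.detRowAlternating (R := ℤ) (n := Fin b)).toMultilinearMap.map_sum
      (g := gRow)
    rw [show ((Matrix.detRowAlternating (R := ℤ) (n := Fin b)) fun j => ∑ x : Bool, gRow j x)
        = ((Matrix.detRowAlternating (R := ℤ) (n := Fin b)).toMultilinearMap
            fun j => ∑ x : Bool, gRow j x) from rfl, hexp]
    rw [show cnt b (n + 1) s e
        = ∑ ε : Fin b → Bool, if StrictAnti (nxt s ε) then cnt b n (nxt s ε) e else 0
        from rfl]
    push_cast
    refine Finset.sum_congr rfl fun ε _ => ?_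
    have hrowε : (fun j => gRow j (ε j)) = fun j k => (chooseZ n (nxt s ε j - e k) : ℤ) := by
      funext j k
      simp only [hgRow, nxt]
    by_cases hstrict : StrictAnti (nxt s ε)
    · rw [if_pos hstrict, ih (nxt s ε) hstrict]
      show (Matrix.of fun j k : Fin b => (chooseZ n (nxt s ε j - e k) : ℤ)).det
          = Matrix.detRowAlternating fun i => gRow i (ε i)
      rw [show (fun i => gRow i (ε i)) = fun j k => (chooseZ n (nxt s ε j - e k) : ℤ)
        from hrowε]
      rfl
    · rw [if_neg hstrict]
      have hwk : ∀ (i : ℕ) (h : i + 1 < b),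
          nxt s ε ⟨i + 1, h⟩ ≤ nxt s ε ⟨i, Nat.lt_of_succ_lt h⟩ := by
        intro i h
        have hss := hs (show (⟨i, Nat.lt_of_succ_lt h⟩ : Fin b) < ⟨i + 1, h⟩ from by
          simp [Fin.lt_def])
        have e1 : nxt s ε ⟨i + 1, h⟩ = s ⟨i + 1, h⟩ - (if ε ⟨i + 1, h⟩ then 1 else 0) := rfl
        have e2 : nxt s ε ⟨i, Nat.lt_of_succ_lt h⟩
            = s ⟨i, Nat.lt_of_succ_lt h⟩ - (if ε ⟨i, Nat.lt_of_succ_lt h⟩ then 1 else 0) := rfl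
        rw [e1, e2]
        split_ifs <;> linarith [hss]
      rw [strictAnti_fin_iff] at hstrict
      push_neg at hstrict
      obtain ⟨i, hib, hieq⟩ := hstrict
      have heq : nxt s ε ⟨i + 1, hib⟩ = nxt s ε ⟨i, Nat.lt_of_succ_lt hib⟩ :=
        le_antisymm (hwk i hib) hieq
      have hij : (⟨i, Nat.lt_of_succ_lt hib⟩ : Fin b) ≠ ⟨i + 1, hib⟩ :=
        Fin.ne_of_val_ne (Nat.ne_of_lt (Nat.lt_succ_self i))
      have hroweq : (fun j => gRow j (ε j)) ⟨i, Nat.lt_of_succ_lt hib⟩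
          = (fun j => gRow j (ε j)) ⟨i + 1, hib⟩ := by
        rw [hrowε]
        funext k
        simp only []
        rw [heq]
      exact (AlternatingMap.map_eq_zero_of_eq
        (Matrix.detRowAlternating (R := ℤ) (n := Fin b))
        (fun j => gRow j (ε j)) hroweq hij).symm

/-! ### Processes (nonintersecting height functions) -/

def IsProc (b n : ℕ) (s e : Fin b → ℤ) (h : Fin (n + 1) → Fin b → ℤ) : Prop :=
  h 0 = s ∧ h (Fin.last n) = e ∧ (∀ t, StrictAnti (h t)) ∧
    ∀ (t : Fin n) (j : Fin b), h t.succ j = h t.castSucc j ∨ h t.succ j = h t.castSucc j - 1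

def Proc (b n : ℕ) (s e : Fin b → ℤ) : Type := {h // IsProc b n s e h}

lemma proc_steps_bounds {b n : ℕ} (h : Fin (n + 1) → Fin b → ℤ)
    (hstep : ∀ (t : Fin n) (j : Fin b),
      h t.succ j = h t.castSucc j ∨ h t.succ j = h t.castSucc j - 1)
    (j : Fin b) (t t' : Fin (n + 1)) (htt : t ≤ t') :
    h t' j ≤ h t j ∧ h t j ≤ h t' j + ((t' : ℕ) - (t : ℕ)) := by
  obtain ⟨tv, htv⟩ := t
  obtain ⟨t'v, ht'v⟩ := t'
  have hle : tv ≤ t'v := htt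
  have key : ∀ (m : ℕ) (hm : m < n + 1), tv ≤ m →
      h ⟨m, hm⟩ j ≤ h ⟨tv, htv⟩ j ∧ h ⟨tv, htv⟩ j ≤ h ⟨m, hm⟩ j + ((m : ℕ) - tv) := by
    intro m
    induction m with
    | zero =>
      intro hm h0
      have htv0 : tv = 0 := by omega
      subst htv0
      exact ⟨le_refl _, by simp⟩
    | succ m ih =>
      intro hm hle2
      rcases Nat.lt_or_ge tv (m + 1) with hlt | hge
      · have hm' : m < n + 1 := Nat.lt_of_succ_lt hm
        have hmn : m < n := by omega
        have hstep' := hstep ⟨m, hmn⟩ j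
        have hsucc : (⟨m, hmn⟩ : Fin n).succ = ⟨m + 1, hm⟩ := rfl
        have hcast : (⟨m, hmn⟩ : Fin n).castSucc = ⟨m, hm'⟩ := rfl
        rw [hsucc, hcast] at hstep'
        obtain ⟨ih1, ih2⟩ := ih hm' (by omega)
        rcases hstep' with h1 | h1 <;> rw [h1] <;> exact ⟨by omega, by omega⟩
      · have htveq : tv = m + 1 := by omega
        subst htveq
        exact ⟨le_refl _, by simp⟩
  exact key t'v ht'v hle

instance proc_finite (b n : ℕ) (s e : Fin b → ℤ) : Finite (Proc b n s e) := by
  have hbd : ∀ (h : Proc b n s e) (t : Fin (n + 1)) (j : Fin b),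
      0 ≤ s j - h.1 t j ∧ s j - h.1 t j ≤ (t : ℕ) := by
    intro h t j
    obtain ⟨h1, h2⟩ := proc_steps_bounds h.1 h.2.2.2.2 j 0 t (Fin.zero_le t)
    have hs0 : h.1 0 j = s j := by rw [h.2.1]
    rw [hs0] at h1 h2
    constructor <;> omega
  apply Finite.of_injective (fun (h : Proc b n s e) =>
    (fun t j => ⟨(s j - h.1 t j).toNat, by
      obtain ⟨hb1, hb2⟩ := hbd h t j
      have := t.isLt
      omega⟩ : Fin (n + 1) → Fin b → Fin (n + 1)))
  intro h h' heq
  apply Subtype.ext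
  funext t j
  have hval := congrArg Fin.val (congrFun (congrFun heq t) j)
  simp only [] at hval
  obtain ⟨hb1, hb2⟩ := hbd h t j
  obtain ⟨hb1', hb2'⟩ := hbd h' t j
  omega

noncomputable instance (b n : ℕ) (s e : Fin b → ℤ) : Fintype (Proc b n s e) :=
  Fintype.ofFinite _

lemma card_proc_zero (s e : Fin b → ℤ) (hs : StrictAnti s) :
    Nat.card (Proc b 0 s e) = if s = e then 1 else 0 := by
  by_cases hse : s = e
  · subst hse
    rw [if_pos rfl]
    have hu : Unique (Proc b 0 s s) :=
      { default := ⟨fun _ => s, rfl, rfl, fun _ => hs, fun t _ => t.elim0⟩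
        uniq := fun h => by
          apply Subtype.ext
          funext t j
          have ht : t = 0 := Fin.ext (by omega)
          rw [ht]
          show h.1 0 j = s j
          rw [h.2.1] }
    exact Nat.card_unique
  · rw [if_neg hse]
    have he : IsEmpty (Proc b 0 s e) := ⟨fun h => hse (by
      have h1 := h.2.1
      have h2 := h.2.2.1
      rw [show (Fin.last 0) = 0 from rfl] at h2
      rw [← h1]
      exact h2)⟩
    exact Nat.card_of_isEmpty

lemma proc_heq {b n : ℕ} {e : Fin b → ℤ} {s1 s2 : Fin b → ℤ} (h12 : s1 = s2)
    (p : Proc b n s1 e) (q : Proc b n s2 e) (hval : p.1 = q.1) : HEq p q := by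
  subst h12
  rw [Subtype.ext hval]

lemma card_proc_succ (n : ℕ) (s e : Fin b → ℤ) (hs : StrictAnti s) :
    Nat.card (Proc b (n + 1) s e) =
      ∑ ε : Fin b → Bool,
        if StrictAnti (nxt s ε) then Nat.card (Proc b n (nxt s ε) e) else 0 := by
  classical
  have E : Proc b (n + 1) s e ≃ Σ ε : Fin b → Bool, Proc b n (nxt s ε) e :=
    { toFun := fun h =>
        ⟨fun j => decide (h.1 (Fin.succ 0) j ≠ s j),
         ⟨fun t => h.1 t.succ, by
            -- tail 0 = nxt s (εof h)
            funext j
            have hstep0 := h.2.2.2.2 0 j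
            have hc : (0 : Fin (n + 1)).castSucc = (0 : Fin (n + 2)) := by
              ext
              simp
            rw [hc] at hstep0
            have hs0 : h.1 (0 : Fin (n + 2)) j = s j := by rw [h.2.1]
            rw [hs0] at hstep0
            show h.1 (Fin.succ 0) j = nxt s (fun j => decide (h.1 (Fin.succ 0) j ≠ s j)) j
            simp only [nxt]
            rcases hstep0 with h1 | h1
            · simp only [h1]
              simp
            · simp only [h1]
              have hne : s j - 1 ≠ s j := by omega
              simp [hne]
          , by
            -- tail last = e
            show h.1 (Fin.last n).succ = e
            rw [Fin.succ_last, h.2.2.1]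
          , fun t => h.2.2.2.1 t.succ
          , by
            intro t j
            have := h.2.2.2.2 t.succ j
            rwa [← Fin.succ_castSucc] at this⟩⟩
      invFun := fun p =>
        ⟨fun t => Fin.cases s (fun t' => p.2.1 t') t, by funext j; simp, by
            -- last
            have hl : Fin.last (n + 1) = (Fin.last n).succ := (Fin.succ_last n).symm
            rw [hl]
            show p.2.1 (Fin.last n) = e
            exact p.2.2.2.1
          , by
            intro t
            induction t using Fin.cases with
            | zero => exact hs
            | succ t' =>
              show StrictAnti (p.2.1 t')
              exact p.2.2.2.2.1 t'
          , by
            intro t j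
            induction t using Fin.cases with
            | zero =>
              simp only [Fin.castSucc_zero, Fin.cases_zero, Fin.cases_succ]
              rw [show p.2.1 0 = nxt s p.1 from p.2.2.1]
              simp only [nxt]
              by_cases hε : p.1 j
              · right
                rw [if_pos hε]
              · left
                rw [if_neg hε]
                ring
            | succ t' =>
              rw [← Fin.succ_castSucc]
              simp only [Fin.cases_succ]
              exact p.2.2.2.2.2 t' j⟩
      left_inv := fun h => by
        apply Subtype.ext
        funext t j
        induction t using Fin.cases with
        | zero =>
          show s j = h.1 0 j
          rw [h.2.1]
        | succ t' => rfl
      right_inv := fun p => by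
        obtain ⟨ε, g⟩ := p
        have hε : (fun j => decide ((Fin.cases (motive := fun _ => Fin b → ℤ) s
            (fun t' => g.1 t') (Fin.succ 0)) j ≠ s j)) = ε := by
          funext j
          show decide (g.1 0 j ≠ s j) = ε j
          rw [show g.1 0 j = nxt s ε j from by rw [g.2.1]]
          simp only [nxt]
          by_cases hε : ε j
          · have hne : s j - 1 ≠ s j := by omega
            simp [hε, hne]
          · simp [hε]
        refine Sigma.ext hε (proc_heq (congrArg (nxt s) hε) _ _ ?_)
        funext t j
        show Fin.cases s (fun t' => g.1 t') t.succ j = g.1 t j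
        simp }
  rw [Nat.card_congr E, Nat.card_eq_fintype_card, Fintype.card_sigma]
  refine Finset.sum_congr rfl fun ε _ => ?_
  by_cases hst : StrictAnti (nxt s ε)
  · rw [if_pos hst, Nat.card_eq_fintype_card]
  · rw [if_neg hst]
    have hemp : IsEmpty (Proc b n (nxt s ε) e) :=
      ⟨fun g => hst (by rw [← g.2.1]; exact g.2.2.2.1 0)⟩
    exact Fintype.card_eq_zero

lemma cnt_eq_card (n : ℕ) (s e : Fin b → ℤ) (hs : StrictAnti s) :
    cnt b n s e = Nat.card (Proc b n s e) := by
  induction n generalizing s with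
  | zero => rw [card_proc_zero s e hs]; rfl
  | succ n ih =>
    rw [card_proc_succ n s e hs]
    show (∑ ε : Fin b → Bool,
        if StrictAnti (nxt s ε) then cnt b n (nxt s ε) e else 0) = _
    refine Finset.sum_congr rfl fun ε _ => ?_
    by_cases hst : StrictAnti (nxt s ε)
    · rw [if_pos hst, if_pos hst, ih (nxt s ε) hst]
    · rw [if_neg hst, if_neg hst]

/-! ### The bijection with plane partitions -/

variable (a c : ℕ)

def Sv (b c : ℕ) : Fin b → ℤ := fun j => (c : ℤ) + ((b : ℤ) - 1 - (j : ℤ))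
def Ev (b : ℕ) : Fin b → ℤ := fun j => (b : ℤ) - 1 - (j : ℤ)

lemma strictAnti_Sv (b c : ℕ) : StrictAnti (Sv b c) := by
  intro j j' hj
  have hh : (j : ℕ) < (j' : ℕ) := hj
  simp only [Sv]
  omega

lemma strictAnti_Ev (b : ℕ) : StrictAnti (Ev b) := by
  intro j j' hj
  have hh : (j : ℕ) < (j' : ℕ) := hj
  simp only [Ev]
  omega

def PP (a b c : ℕ) : Type :=
  {π : Fin a → Fin b → Fin (c + 1) //
      ∀ i i' j j', i ≤ i' → j ≤ j' → π i' j' ≤ π i j}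

section Bijection

variable {a c : ℕ}

/-- column threshold counts -/
def mvF {b : ℕ} (π : Fin a → Fin b → Fin (c + 1)) (j : Fin b) (k : Fin c) : ℕ :=
  #(univ.filter fun i : Fin a => (k : ℕ) < ((π i j : ℕ)))

def wF {b : ℕ} (π : Fin a → Fin b → Fin (c + 1)) (j : Fin b) (k : Fin c) : ℕ :=
  mvF π j k + (c - (k : ℕ))

def PhiV {b : ℕ} (π : Fin a → Fin b → Fin (c + 1)) : Fin (a + c + 1) → Fin b → ℤ :=
  fun t j => ((b : ℤ) - 1 - (j : ℤ)) +
    (#(univ.filter fun k : Fin c => (t : ℕ) < wF π j k) : ℤ)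

variable {b : ℕ} {π : Fin a → Fin b → Fin (c + 1)}
  (hπ : ∀ i i' j j', i ≤ i' → j ≤ j' → π i' j' ≤ π i j)

lemma mvF_anti_col (j : Fin b) : ∀ {k k' : Fin c}, k ≤ k' → mvF π j k' ≤ mvF π j k := by
  intro k k' hkk
  apply Finset.card_le_card
  intro i hi
  simp only [Finset.mem_filter, Finset.mem_univ, true_and] at hi ⊢
  have : (k : ℕ) ≤ (k' : ℕ) := hkk
  omega

include hπ in
lemma mvF_anti_row {j j' : Fin b} (hjj : j ≤ j') (k : Fin c) : mvF π j' k ≤ mvF π j k := by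
  apply Finset.card_le_card
  intro i hi
  simp only [Finset.mem_filter, Finset.mem_univ, true_and] at hi ⊢
  have h2 := hπ i i j j' (le_refl i) hjj
  have h3 : (π i j' : ℕ) ≤ (π i j : ℕ) := h2
  omega

lemma mvF_le (j : Fin b) (k : Fin c) : mvF π j k ≤ a := by
  calc mvF π j k ≤ #(univ : Finset (Fin a)) := Finset.card_filter_le _ _
  _ = a := by simp

lemma mvF_lt_iff (hπa : ∀ i i' j, i ≤ i' → π i' j ≤ π i j)
    (i : Fin a) (j : Fin b) (k : Fin c) :
    (k : ℕ) < (π i j : ℕ) ↔ (i : ℕ) < mvF π j k := by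
  exact conj_core (x := fun i => ((π i j : ℕ)))
    (fun i i' hii => by exact_mod_cast hπa i i' j hii) i (k : ℕ)

lemma wF_strictAnti (j : Fin b) : ∀ {k k' : Fin c}, k < k' → wF π j k' < wF π j k := by
  intro k k' hkk
  have h1 := mvF_anti_col (π := π) j (le_of_lt hkk)
  have h2 : (k : ℕ) < (k' : ℕ) := hkk
  have h3 := k'.isLt
  unfold wF
  omega

lemma wF_ge (j : Fin b) (k : Fin c) : c - (k : ℕ) ≤ wF π j k := by
  unfold wF
  omega

lemma wF_le (j : Fin b) (k : Fin c) : wF π j k ≤ a + c - (k : ℕ) := by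
  have := mvF_le (π := π) j k
  have := k.isLt
  unfold wF
  omega

include hπ in
lemma PhiV_isProc : IsProc b (a + c) (Sv b c) (Ev b) (PhiV π) := by
  have hπa : ∀ i i' j, i ≤ i' → π i' j ≤ π i j := fun i i' j hii =>
    hπ i i' j j hii (le_refl j)
  refine ⟨?_, ?_, ?_, ?_⟩
  · -- PhiV 0 = Sv
    funext j
    have hfull : (univ.filter fun k : Fin c =>
        (((0 : Fin (a + c + 1)) : ℕ)) < wF π j k) = univ := by
      apply Finset.filter_true_of_mem
      intro k _
      have h1 := wF_ge (π := π) j k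
      have h2 := k.isLt
      simp only [Fin.val_zero]
      omega
    show ((b : ℤ) - 1 - (j : ℤ)) + _ = Sv b c j
    rw [hfull]
    simp only [Sv, Finset.card_univ, Fintype.card_fin]
    ring
  · -- PhiV last = Ev
    funext j
    have hempty : (univ.filter fun k : Fin c =>
        ((Fin.last (a + c) : ℕ)) < wF π j k) = ∅ := by
      apply Finset.filter_false_of_mem
      intro k _
      have h1 := wF_le (π := π) j k
      simp only [Fin.val_last]
      omega
    show ((b : ℤ) - 1 - (j : ℤ)) + _ = Ev b j
    rw [hempty]
    simp only [Ev, Finset.card_empty]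
    push_cast
    ring
  · -- StrictAnti in j
    intro t j j' hjj
    have hcnt : #(univ.filter fun k : Fin c => (t : ℕ) < wF π j' k) ≤
        #(univ.filter fun k : Fin c => (t : ℕ) < wF π j k) := by
      apply Finset.card_le_card
      intro k hk
      simp only [Finset.mem_filter, Finset.mem_univ, true_and] at hk ⊢
      have h2 := mvF_anti_row hπ (le_of_lt hjj) k
      unfold wF at hk ⊢
      omega
    have hjv : (j : ℕ) < (j' : ℕ) := hjj
    unfold PhiV
    omega
  · -- steps
    intro t j
    have hsucc : ((t.succ : Fin (a + c + 1)) : ℕ) = (t : ℕ) + 1 := rfl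
    have hcast : ((t.castSucc : Fin (a + c + 1)) : ℕ) = (t : ℕ) := rfl
    set A := univ.filter fun k : Fin c => (t : ℕ) < wF π j k with hA
    set B := univ.filter fun k : Fin c => (t : ℕ) + 1 < wF π j k with hB
    have hBA : B ⊆ A := by
      intro k hk
      simp only [hA, hB, Finset.mem_filter, Finset.mem_univ, true_and] at hk ⊢
      omega
    have hsd : #(A \ B) ≤ 1 := by
      rw [Finset.card_le_one]
      intro k hk k' hk'
      simp only [hA, hB, Finset.mem_sdiff, Finset.mem_filter, Finset.mem_univ, true_and,
        not_lt] at hk hk'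
      have e1 : wF π j k = (t : ℕ) + 1 := by omega
      have e2 : wF π j k' = (t : ℕ) + 1 := by omega
      by_contra hne
      rcases lt_or_gt_of_ne hne with hlt | hlt
      · have := wF_strictAnti (π := π) j hlt
        omega
      · have := wF_strictAnti (π := π) j hlt
        omega
    have hcard : #A ≤ #B + 1 := by
      calc #A ≤ #(A \ B) + #B := Finset.card_le_card_sdiff_add_card
      _ ≤ #B + 1 := by omega
    have hcard2 : #B ≤ #A := Finset.card_le_card hBA
    show PhiV π t.succ j = PhiV π t.castSucc j ∨
      PhiV π t.succ j = PhiV π t.castSucc j - 1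
    unfold PhiV
    rw [hsucc, hcast, ← hA, ← hB]
    rcases (show #B = #A ∨ #B + 1 = #A by omega) with h1 | h1 <;> [left; right] <;>
      rw [← h1] <;> push_cast <;> ring

lemma sa_telescope {N : ℕ} {f : Fin N → ℤ} (hf : StrictAnti f) {j j' : Fin N} (h : j ≤ j') :
    f j' + (((j' : ℕ) - (j : ℕ) : ℕ) : ℤ) ≤ f j := by
  obtain ⟨jv, hjv⟩ := j
  obtain ⟨j'v, hj'v⟩ := j'
  have hle : jv ≤ j'v := h
  have key : ∀ (m : ℕ) (hm : m < N), jv ≤ m →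
      f ⟨m, hm⟩ + ((m - jv : ℕ) : ℤ) ≤ f ⟨jv, hjv⟩ := by
    intro m
    induction m with
    | zero =>
      intro hm h0
      have hjv0 : jv = 0 := by omega
      subst hjv0
      simp
    | succ m ih =>
      intro hm hle2
      rcases Nat.lt_or_ge jv (m + 1) with hlt | hge
      · have hm' : m < N := Nat.lt_of_succ_lt hm
        have hstep : f ⟨m + 1, hm⟩ < f ⟨m, hm'⟩ := hf (by simp [Fin.lt_def])
        have hih := ih hm' (by omega)
        have hcast : ((m + 1 - jv : ℕ) : ℤ) = ((m - jv : ℕ) : ℤ) + 1 := by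
          omega
        omega
      · have hjveq : jv = m + 1 := by omega
        subst hjveq
        simp
  exact key j'v hj'v hle

section BijectionInv

variable {a b c : ℕ} {h : Fin (a + c + 1) → Fin b → ℤ}
  (hh : IsProc b (a + c) (Sv b c) (Ev b) h)

def GF (h : Fin (a + c + 1) → Fin b → ℤ) (j : Fin b) (t : Fin (a + c + 1)) : ℕ :=
  (h t j - ((b : ℤ) - 1 - (j : ℤ))).toNat

def vvF (h : Fin (a + c + 1) → Fin b → ℤ) (j : Fin b) (k : Fin c) : ℕ :=
  #(univ.filter fun t : Fin (a + c + 1) => (k : ℕ) < GF h j t)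

def mrF (h : Fin (a + c + 1) → Fin b → ℤ) (j : Fin b) (k : Fin c) : ℕ :=
  vvF h j k - (c - (k : ℕ))

include hh in
lemma h_bounds (t : Fin (a + c + 1)) (j : Fin b) :
    Ev b j ≤ h t j ∧ h t j ≤ Sv b c j := by
  obtain ⟨h0, hlast, _, hstep⟩ := hh
  constructor
  · have hb := (proc_steps_bounds h hstep j t (Fin.last (a + c)) (Fin.le_last t)).1
    rw [hlast] at hb
    exact hb
  · have hb := (proc_steps_bounds h hstep j 0 t (Fin.zero_le t)).1
    rw [h0] at hb
    exact hb

include hh in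
lemma GF_cast (t : Fin (a + c + 1)) (j : Fin b) :
    (GF h j t : ℤ) = h t j - ((b : ℤ) - 1 - (j : ℤ)) := by
  have hb := (h_bounds hh t j).1
  unfold GF
  rw [Int.toNat_of_nonneg]
  simp only [Ev] at hb
  omega

include hh in
lemma GF_le_c (t : Fin (a + c + 1)) (j : Fin b) : GF h j t ≤ c := by
  have hb := (h_bounds hh t j).2
  have hc := GF_cast hh t j
  simp only [Sv] at hb
  omega

include hh in
lemma GF_zero (j : Fin b) : GF h j 0 = c := by
  have hc := GF_cast hh 0 j
  rw [hh.1] at hc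
  simp only [Sv] at hc
  omega

include hh in
lemma GF_last (j : Fin b) : GF h j (Fin.last (a + c)) = 0 := by
  have hc := GF_cast hh (Fin.last (a + c)) j
  rw [hh.2.1] at hc
  simp only [Ev] at hc
  omega

include hh in
lemma GF_anti (j : Fin b) : Antitone (GF h j) := by
  intro t t' htt
  have hb := (proc_steps_bounds h hh.2.2.2 j t t' htt).1
  have h1 := GF_cast hh t j
  have h2 := GF_cast hh t' j
  omega

include hh in
lemma GF_lb (t : Fin (a + c + 1)) (j : Fin b) : c ≤ GF h j t + (t : ℕ) := by
  have hb := (proc_steps_bounds h hh.2.2.2 j 0 t (Fin.zero_le t)).2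
  rw [hh.1] at hb
  have h1 := GF_cast hh t j
  simp only [Sv] at hb
  have ht0 : ((0 : Fin (a + c + 1)) : ℕ) = 0 := rfl
  rw [ht0] at hb
  omega

include hh in
lemma GF_ub (t : Fin (a + c + 1)) (j : Fin b) : GF h j t + (t : ℕ) ≤ a + c := by
  have hb := (proc_steps_bounds h hh.2.2.2 j t (Fin.last (a + c)) (Fin.le_last t)).2
  rw [hh.2.1] at hb
  have h1 := GF_cast hh t j
  simp only [Ev, Fin.val_last] at hb
  omega

include hh in
lemma GF_anti_row (t : Fin (a + c + 1)) {j j' : Fin b} (hjj : j ≤ j') :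
    GF h j' t ≤ GF h j t := by
  have hb := sa_telescope (hh.2.2.1 t) hjj
  have h1 := GF_cast hh t j
  have h2 := GF_cast hh t j'
  have hv : (j : ℕ) ≤ (j' : ℕ) := hjj
  omega

include hh in
lemma vv_core (t : Fin (a + c + 1)) (j : Fin b) (k : Fin c) :
    (k : ℕ) < GF h j t ↔ (t : ℕ) < vvF h j k :=
  conj_core (GF_anti hh j) t (k : ℕ)

include hh in
lemma vv_ge (j : Fin b) (k : Fin c) : c - (k : ℕ) ≤ vvF h j k := by
  have hsub : (univ.filter fun t : Fin (a + c + 1) => (t : ℕ) < c - (k : ℕ)) ⊆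
      (univ.filter fun t : Fin (a + c + 1) => (k : ℕ) < GF h j t) := by
    intro t ht
    simp only [Finset.mem_filter, Finset.mem_univ, true_and] at ht ⊢
    have := GF_lb hh t j
    omega
  have hcard := Finset.card_le_card hsub
  rw [card_filter_val_lt] at hcard
  have hk := k.isLt
  unfold vvF
  omega

include hh in
lemma vv_le (j : Fin b) (k : Fin c) : vvF h j k ≤ a + c - (k : ℕ) := by
  have hsub : (univ.filter fun t : Fin (a + c + 1) => (k : ℕ) < GF h j t) ⊆
      (univ.filter fun t : Fin (a + c + 1) => (t : ℕ) < a + c - (k : ℕ)) := by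
    intro t ht
    simp only [Finset.mem_filter, Finset.mem_univ, true_and] at ht ⊢
    have := GF_ub hh t j
    omega
  have hcard := Finset.card_le_card hsub
  rw [card_filter_val_lt] at hcard
  have hk := k.isLt
  unfold vvF
  omega

include hh in
lemma GF_ivt (j : Fin b) (w : ℕ) (hw : w ≤ c) : ∃ t, GF h j t = w := by
  rcases Nat.eq_or_lt_of_le hw with heq | hlt
  · exact ⟨0, by rw [GF_zero hh]; omega⟩
  · set S := univ.filter (fun t : Fin (a + c + 1) => GF h j t ≤ w) with hS
    have hne : S.Nonempty := ⟨Fin.last (a + c), by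
      simp only [hS, Finset.mem_filter, Finset.mem_univ, true_and, GF_last hh]
      omega⟩
    set t1 := S.min' hne with ht1def
    have ht1 : GF h j t1 ≤ w := by
      have := S.min'_mem hne
      simp only [hS, Finset.mem_filter, Finset.mem_univ, true_and] at this
      exact this
    have ht1pos : 0 < (t1 : ℕ) := by
      rcases Nat.eq_zero_or_pos (t1 : ℕ) with hp | hp
      swap
      · exact hp
      · exfalso
        have h0 : t1 = 0 := Fin.ext hp
        rw [h0, GF_zero hh] at ht1
        omega
    set t0 : Fin (a + c) := ⟨(t1 : ℕ) - 1, by have := t1.isLt; omega⟩ with ht0def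
    have hsucc : t0.succ = t1 := Fin.ext (by simp only [Fin.val_succ, ht0def]; omega)
    have hnotin : w < GF h j t0.castSucc := by
      by_contra hle2
      push_neg at hle2
      have hmem : t0.castSucc ∈ S := by
        simp only [hS, Finset.mem_filter, Finset.mem_univ, true_and]
        exact hle2
      have := S.min'_le _ hmem
      rw [← ht1def] at this
      have hvv : (t1 : ℕ) ≤ (t0.castSucc : ℕ) := this
      simp only [Fin.coe_castSucc, ht0def] at hvv
      omega
    have hstep := hh.2.2.2 t0 j
    have hc1 := GF_cast hh t0.castSucc j
    have hc2 := GF_cast hh t0.succ j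
    rw [hsucc] at hc2
    refine ⟨t1, ?_⟩
    rcases hstep with h1 | h1 <;> rw [hsucc] at h1 <;> omega

include hh in
lemma vv_strictAnti (j : Fin b) : StrictAnti (vvF h j) := by
  intro k k' hkk
  obtain ⟨t1, ht1⟩ := GF_ivt hh j ((k : ℕ) + 1) (by have := k'.isLt; have : (k:ℕ) < (k':ℕ) := hkk; omega)
  apply Finset.card_lt_card
  constructor
  · intro t ht
    simp only [Finset.mem_filter, Finset.mem_univ, true_and] at ht ⊢
    have : (k : ℕ) < (k' : ℕ) := hkk
    omega
  · intro hcon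
    have := hcon (by
      simp only [Finset.mem_filter, Finset.mem_univ, true_and]
      omega : t1 ∈ univ.filter fun t => (k : ℕ) < GF h j t)
    simp only [Finset.mem_filter, Finset.mem_univ, true_and] at this
    have hkv : (k : ℕ) < (k' : ℕ) := hkk
    omega

include hh in
lemma mr_plus (j : Fin b) (k : Fin c) : mrF h j k + (c - (k : ℕ)) = vvF h j k := by
  have := vv_ge hh j k
  unfold mrF
  omega

include hh in
lemma mr_anti_col (j : Fin b) {k k' : Fin c} (hkk : k ≤ k') : mrF h j k' ≤ mrF h j k := by
  have htel := sa_telescope (f := fun k : Fin c => (vvF h j k : ℤ))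
    (fun x y hxy => by
      simp only []
      exact_mod_cast vv_strictAnti hh j hxy) hkk
  have h1 := mr_plus hh j k
  have h2 := mr_plus hh j k'
  have hv : (k : ℕ) ≤ (k' : ℕ) := hkk
  have hk'c := k'.isLt
  omega

include hh in
lemma mr_le_a (j : Fin b) (k : Fin c) : mrF h j k ≤ a := by
  have := vv_le hh j k
  have := k.isLt
  unfold mrF
  omega

include hh in
lemma mr_anti_row {j j' : Fin b} (hjj : j ≤ j') (k : Fin c) : mrF h j' k ≤ mrF h j k := by
  have hsub : (univ.filter fun t : Fin (a + c + 1) => (k : ℕ) < GF h j' t) ⊆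
      (univ.filter fun t : Fin (a + c + 1) => (k : ℕ) < GF h j t) := by
    intro t ht
    simp only [Finset.mem_filter, Finset.mem_univ, true_and] at ht ⊢
    have := GF_anti_row hh t hjj
    omega
  have hcard := Finset.card_le_card hsub
  have h1 := mr_plus hh j k
  have h2 := mr_plus hh j' k
  unfold vvF at h1 h2
  omega

def PsiV (h : Fin (a + c + 1) → Fin b → ℤ) : Fin a → Fin b → Fin (c + 1) :=
  fun i j => ⟨#(univ.filter fun k : Fin c => (i : ℕ) < mrF h j k),
    Nat.lt_succ_of_le (le_trans (Finset.card_filter_le _ _) (by simp))⟩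

include hh in
lemma PsiV_prop : ∀ (i i' : Fin a) (j j' : Fin b),
    i ≤ i' → j ≤ j' → PsiV h i' j' ≤ PsiV h i j := by
  intro i i' j j' hii hjj
  show (PsiV h i' j' : ℕ) ≤ (PsiV h i j : ℕ)
  show #(univ.filter fun k : Fin c => (i' : ℕ) < mrF h j' k) ≤
    #(univ.filter fun k : Fin c => (i : ℕ) < mrF h j k)
  apply Finset.card_le_card
  intro k hk
  simp only [Finset.mem_filter, Finset.mem_univ, true_and] at hk ⊢
  have h1 := mr_anti_row hh hjj k
  have h2 : (i : ℕ) ≤ (i' : ℕ) := hii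
  omega

end BijectionInv

end Bijection


section RoundTrips

variable {a b c : ℕ}

lemma wF_anti (π : Fin a → Fin b → Fin (c + 1)) (j : Fin b) : Antitone (wF π j) := by
  intro k k' hkk
  rcases eq_or_lt_of_le hkk with heq | hlt
  · rw [heq]
  · exact le_of_lt (wF_strictAnti j hlt)

lemma GF_PhiV (π : Fin a → Fin b → Fin (c + 1)) (j : Fin b) (t : Fin (a + c + 1)) :
    GF (PhiV π) j t = #(univ.filter fun k : Fin c => (t : ℕ) < wF π j k) := by
  unfold GF PhiV
  rw [add_sub_cancel_left]
  exact Int.toNat_natCast _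

lemma vvF_PhiV (π : Fin a → Fin b → Fin (c + 1)) (j : Fin b) (k : Fin c) :
    vvF (PhiV π) j k = wF π j k := by
  unfold vvF
  have hiff : ∀ t : Fin (a + c + 1),
      ((k : ℕ) < GF (PhiV π) j t ↔ (t : ℕ) < wF π j k) := by
    intro t
    rw [GF_PhiV]
    exact (conj_core (wF_anti π j) k (t : ℕ)).symm
  rw [Finset.filter_congr (fun t _ => hiff t), card_filter_val_lt]
  apply min_eq_left
  have := wF_le (π := π) j k
  omega

lemma mrF_PhiV (π : Fin a → Fin b → Fin (c + 1)) (j : Fin b) (k : Fin c) :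
    mrF (PhiV π) j k = mvF π j k := by
  unfold mrF
  rw [vvF_PhiV]
  unfold wF
  omega

lemma left_inv_val {π : Fin a → Fin b → Fin (c + 1)}
    (hπ : ∀ i i' j j', i ≤ i' → j ≤ j' → π i' j' ≤ π i j) :
    PsiV (PhiV π) = π := by
  have hπa : ∀ i i' j, i ≤ i' → π i' j ≤ π i j := fun i i' j hii =>
    hπ i i' j j hii (le_refl j)
  funext i j
  apply Fin.ext
  show #(univ.filter fun k : Fin c => (i : ℕ) < mrF (PhiV π) j k) = ((π i j : ℕ))
  have hiff : ∀ k : Fin c, ((i : ℕ) < mrF (PhiV π) j k ↔ (k : ℕ) < ((π i j : ℕ))) := by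
    intro k
    rw [mrF_PhiV]
    exact (mvF_lt_iff hπa i j k).symm
  rw [Finset.filter_congr (fun k _ => hiff k), card_filter_val_lt]
  exact min_eq_left (Nat.lt_succ_iff.1 (π i j).isLt)

variable {h : Fin (a + c + 1) → Fin b → ℤ} (hh : IsProc b (a + c) (Sv b c) (Ev b) h)

include hh in
lemma mvF_PsiV (j : Fin b) (k : Fin c) : mvF (PsiV h) j k = mrF h j k := by
  unfold mvF
  have hiff : ∀ i : Fin a, ((k : ℕ) < ((PsiV h i j : ℕ)) ↔ (i : ℕ) < mrF h j k) := by
    intro i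
    show (k : ℕ) < #(univ.filter fun k' : Fin c => (i : ℕ) < mrF h j k') ↔ _
    exact (conj_core (x := fun k' => mrF h j k')
      (fun x y hxy => mr_anti_col hh j hxy) k (i : ℕ)).symm
  rw [Finset.filter_congr (fun i _ => hiff i), card_filter_val_lt]
  exact min_eq_left (mr_le_a hh j k)

include hh in
lemma right_inv_val : PhiV (PsiV h) = h := by
  funext t j
  show ((b : ℤ) - 1 - (j : ℤ)) +
    (#(univ.filter fun k : Fin c => (t : ℕ) < wF (PsiV h) j k) : ℤ) = h t j
  have hw : ∀ k : Fin c, wF (PsiV h) j k = vvF h j k := by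
    intro k
    unfold wF
    rw [mvF_PsiV hh]
    exact mr_plus hh j k
  have hiff : ∀ k : Fin c, ((t : ℕ) < wF (PsiV h) j k ↔ (k : ℕ) < GF h j t) := by
    intro k
    rw [hw k]
    exact (vv_core hh t j k).symm
  rw [Finset.filter_congr (fun k _ => hiff k), card_filter_val_lt,
    min_eq_left (GF_le_c hh t j)]
  have := GF_cast hh t j
  omega

end RoundTrips

noncomputable def ppEquivProc (a b c : ℕ) : PP a b c ≃ Proc b (a + c) (Sv b c) (Ev b) where
  toFun := fun π => ⟨PhiV π.1, PhiV_isProc π.2⟩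
  invFun := fun h => ⟨PsiV h.1, PsiV_prop h.2⟩
  left_inv := fun π => Subtype.ext (left_inv_val π.2)
  right_inv := fun h => Subtype.ext (right_inv_val h.2)

lemma hyperH_add (x y : ℕ) :
    hyperH (x + y) = hyperH x * ∏ j ∈ Finset.range y, (x + j)! := by
  induction y with
  | zero => simp [hyperH]
  | succ y ih =>
    show hyperH ((x + y) + 1) = _
    unfold hyperH
    rw [Finset.prod_range_succ, Finset.prod_range_succ]
    rw [show (∏ k ∈ Finset.range (x + y), k !) = hyperH (x + y) from rfl, ih]
    unfold hyperH
    ring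

/-! ### Determinant evaluation -/

lemma prod_desc (N : ℕ) : ∀ j : ℕ, j ≤ N →
    ∏ t ∈ range j, ((N : ℚ) - t) = (N)! / ((N - j) : ℕ)! := by
  intro j
  induction j with
  | zero =>
    intro _
    simp only [Finset.range_zero, Finset.prod_empty, Nat.sub_zero]
    rw [div_self (by exact_mod_cast Nat.factorial_ne_zero N)]
  | succ j ih =>
    intro hj
    rw [Finset.prod_range_succ, ih (by omega)]
    have h1 : ((N - j : ℕ))! = (N - j) * ((N - (j + 1) : ℕ))! := by
      have h2 : N - j = (N - (j + 1)) + 1 := by omega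
      rw [h2, Nat.factorial_succ]
    rw [h1]
    have h2 : ((N : ℚ) - j) = ((N - j : ℕ) : ℚ) := by
      rw [Nat.cast_sub (by omega : j ≤ N)]
    rw [h2]
    have h3 : ((N - j : ℕ) : ℚ) ≠ 0 := by
      exact_mod_cast (show (N - j : ℕ) ≠ 0 by omega)
    have h4 : (((N - (j + 1) : ℕ))! : ℚ) ≠ 0 := by
      exact_mod_cast (Nat.factorial_ne_zero _)
    push_cast
    field_simp

lemma entry_formula (a c B : ℕ) (j k : Fin (B + 1)) :
    (chooseZ (a + c + (B - (j : ℕ))) ((c : ℤ) + (k : ℤ) - (j : ℤ)) : ℚ) =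
      (((a + c + (B - (j : ℕ))) : ℕ)! : ℚ) *
        ((((c + (k : ℕ)) : ℕ)! : ℚ) * (((a + (B - (k : ℕ))) : ℕ)! : ℚ))⁻¹ *
        ∏ t ∈ range (j : ℕ), ((c : ℚ) + (k : ℕ) - t) := by
  have hjB : (j : ℕ) ≤ B := by omega
  have hkB : (k : ℕ) ≤ B := by omega
  by_cases hd : (j : ℕ) ≤ c + (k : ℕ)
  · have hx : ((c : ℤ) + (k : ℤ) - (j : ℤ)) = ((c + (k : ℕ) - (j : ℕ) : ℕ) : ℤ) := by
      push_cast
      omega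
    rw [hx, chooseZ_ofNat]
    have hdn : c + (k : ℕ) - (j : ℕ) ≤ a + c + (B - (j : ℕ)) := by omega
    rw [Nat.cast_choose ℚ hdn]
    have hnd : a + c + (B - (j : ℕ)) - (c + (k : ℕ) - (j : ℕ)) = a + (B - (k : ℕ)) := by
      omega
    rw [hnd]
    have hprod : ∏ t ∈ range (j : ℕ), ((c : ℚ) + (k : ℕ) - t) =
        (((c + (k : ℕ)) : ℕ)! : ℚ) / (((c + (k : ℕ) - (j : ℕ)) : ℕ)! : ℚ) := by
      rw [← prod_desc (c + (k : ℕ)) (j : ℕ) hd]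
      refine Finset.prod_congr rfl fun t _ => ?_
      push_cast
      ring
    rw [hprod]
    have f1 : ((((c + (k : ℕ)) - (j:ℕ) : ℕ))! : ℚ) ≠ 0 := by
      exact_mod_cast (Nat.factorial_ne_zero _)
    have f2 : ((((c + (k : ℕ)) : ℕ))! : ℚ) ≠ 0 := by
      exact_mod_cast (Nat.factorial_ne_zero _)
    have f3 : ((((a + (B - (k : ℕ))) : ℕ))! : ℚ) ≠ 0 := by
      exact_mod_cast (Nat.factorial_ne_zero _)
    field_simp
  · rw [chooseZ_neg (by omega)]
    have hmem : c + (k : ℕ) ∈ range (j : ℕ) := Finset.mem_range.2 (by omega)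
    rw [Finset.prod_eq_zero hmem (by push_cast; ring)]
    simp

lemma det_step1 (a c B : ℕ) :
    Matrix.det (Matrix.of fun j k : Fin (B + 1) =>
        (chooseZ (a + c) ((c : ℤ) + (k : ℤ) - (j : ℤ)) : ℚ)) =
    Matrix.det (Matrix.of fun j k : Fin (B + 1) =>
        (chooseZ (a + c + (B - (j : ℕ))) ((c : ℤ) + (k : ℤ) - (j : ℤ)) : ℚ)) := by
  have key : ∀ j k : Fin (B + 1), chooseZ (a + c + (B - (j : ℕ))) ((c : ℤ) + k - j)
      = ∑ j' : Fin (B + 1),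
          chooseZ (B - (j : ℕ)) ((j' : ℤ) - (j : ℤ)) * chooseZ (a + c) ((c : ℤ) + k - j') := by
    intro j k
    rw [chooseZ_add]
    rw [Fin.sum_univ_eq_sum_range
      (fun u => chooseZ (B - (j : ℕ)) ((u : ℤ) - (j : ℤ)) *
        chooseZ (a + c) ((c : ℤ) + (k : ℤ) - (u : ℤ))) (B + 1)]
    rw [← Finset.sum_range_add_sum_Ico _ (show (j : ℕ) ≤ B + 1 by omega)]
    have hz : ∑ u ∈ range (j : ℕ), chooseZ (B - (j : ℕ)) ((u : ℤ) - (j : ℤ)) *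
        chooseZ (a + c) ((c : ℤ) + (k : ℤ) - (u : ℤ)) = 0 := by
      apply Finset.sum_eq_zero
      intro u hu
      rw [Finset.mem_range] at hu
      rw [chooseZ_neg (by omega), zero_mul]
    rw [hz, zero_add, Finset.sum_Ico_eq_sum_range]
    have hrange : B + 1 - (j : ℕ) = B - (j : ℕ) + 1 := by omega
    rw [hrange]
    refine (Finset.sum_congr rfl fun u hu => ?_).symm
    rw [Finset.mem_range] at hu
    have e1 : (((j : ℕ) + u : ℕ) : ℤ) - (j : ℤ) = ((u : ℕ) : ℤ) := by push_cast; ring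
    rw [e1, chooseZ_ofNat]
    congr 1
    push_cast
    ring
  have hmul : (Matrix.of fun j k : Fin (B + 1) =>
        (chooseZ (a + c + (B - (j : ℕ))) ((c : ℤ) + (k : ℤ) - (j : ℤ)) : ℚ))
      = (Matrix.of fun j j' : Fin (B + 1) =>
          (chooseZ (B - (j : ℕ)) ((j' : ℤ) - (j : ℤ)) : ℚ)) *
        (Matrix.of fun j k : Fin (B + 1) =>
          (chooseZ (a + c) ((c : ℤ) + (k : ℤ) - (j : ℤ)) : ℚ)) := by
    ext j k
    simp only [Matrix.mul_apply, Matrix.of_apply]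
    rw [show ((chooseZ (a + c + (B - (j : ℕ))) ((c : ℤ) + (k : ℤ) - (j : ℤ)) : ℚ))
      = ((∑ j' : Fin (B + 1), chooseZ (B - (j : ℕ)) ((j' : ℤ) - (j : ℤ)) *
          chooseZ (a + c) ((c : ℤ) + (k : ℤ) - (j' : ℤ)) : ℕ) : ℚ) from by rw [← key]]
    push_cast
    rfl
  rw [hmul, Matrix.det_mul]
  have hut : (Matrix.of fun j j' : Fin (B + 1) =>
      (chooseZ (B - (j : ℕ)) ((j' : ℤ) - (j : ℤ)) : ℚ)).BlockTriangular id := by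
    intro j j' hlt
    simp only [Matrix.of_apply]
    rw [chooseZ_neg (by
      have : (j' : ℕ) < (j : ℕ) := hlt
      omega)]
    simp
  rw [Matrix.det_of_upperTriangular hut]
  have hdiag : ∀ j : Fin (B + 1),
      (Matrix.of fun j j' : Fin (B + 1) =>
        (chooseZ (B - (j : ℕ)) ((j' : ℤ) - (j : ℤ)) : ℚ)) j j = 1 := by
    intro j
    simp only [Matrix.of_apply, sub_self]
    rw [show (0 : ℤ) = ((0 : ℕ) : ℤ) from rfl, chooseZ_ofNat]
    simp
  rw [Finset.prod_congr rfl fun j _ => hdiag j]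
  simp

lemma det_vdm (c B : ℕ) :
    Matrix.det (Matrix.of fun j k : Fin (B + 1) =>
        ∏ t ∈ range (j : ℕ), ((c : ℚ) + (k : ℕ) - t)) =
      ((∏ x ∈ range (B + 1), (x)! : ℕ) : ℚ) := by
  have h1 : Matrix.det (Matrix.of fun j k : Fin (B + 1) =>
      ∏ t ∈ range (j : ℕ), ((c : ℚ) + (k : ℕ) - t)) =
      Matrix.det (Matrix.vandermonde (fun i : Fin (B + 1) => (c : ℚ) + (i : ℕ))) := by
    rw [← Matrix.det_transpose]
    rw [Matrix.det_eval_matrixOfPolynomials_eq_det_vandermonde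
      (fun i : Fin (B + 1) => (c : ℚ) + (i : ℕ))
      (fun j : Fin (B + 1) => ∏ t ∈ range (j : ℕ), (Polynomial.X - Polynomial.C (t : ℚ)))
      (fun j => by
        rw [Polynomial.natDegree_prod_of_monic _ _
          (fun t _ => Polynomial.monic_X_sub_C _)]
        have hdeg : (∑ i ∈ range ((j : Fin (B+1)) : ℕ),
            (Polynomial.X - Polynomial.C ((i : ℕ) : ℚ)).natDegree) =
            ∑ i ∈ range ((j : Fin (B+1)) : ℕ), 1 :=
          Finset.sum_congr rfl fun t _ => Polynomial.natDegree_X_sub_C (t : ℚ)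
        rw [hdeg]
        simp)
      (fun j => Polynomial.monic_prod_of_monic _ _
        (fun t _ => Polynomial.monic_X_sub_C _))]
    congr 1
    ext j k
    simp [Matrix.transpose_apply, Polynomial.eval_prod]
  rw [h1]
  have h2 : Matrix.det (Matrix.vandermonde (fun i : Fin (B + 1) => (c : ℚ) + (i : ℕ))) =
      Matrix.det (Matrix.vandermonde (fun i : Fin (B + 1) => ((i : ℕ) : ℚ))) := by
    rw [Matrix.det_vandermonde, Matrix.det_vandermonde]
    refine Finset.prod_congr rfl fun i _ => Finset.prod_congr rfl fun j _ => ?_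
    ring
  rw [h2]
  have h3 := Matrix.det_vandermonde_id_eq_superFactorial (R := ℚ) B
  rw [show (fun i : Fin (B + 1) => ((i : ℕ) : ℚ)) = (fun i : Fin (B + 1) => (i : ℚ)) from rfl,
    h3, ← Nat.prod_range_succ_factorial]

lemma det_eval (a c b : ℕ) :
    (Matrix.det (Matrix.of fun j k : Fin b =>
        (chooseZ (a + c) ((c : ℤ) + (k : ℤ) - (j : ℤ)) : ℚ))) *
      ∏ k ∈ range b, ((Nat.factorial (c + k) : ℚ) * (Nat.factorial (a + k) : ℚ)) =
    ∏ j ∈ range b, ((Nat.factorial j : ℚ) * (Nat.factorial (a + c + j) : ℚ)) := by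
  rcases b with _ | B
  · simp [Matrix.det_fin_zero]
  rw [det_step1]
  set Amat : Matrix (Fin (B + 1)) (Fin (B + 1)) ℚ :=
    Matrix.of fun j k : Fin (B + 1) => ∏ t ∈ range (j : ℕ), ((c : ℚ) + (k : ℕ) - t) with hA
  set Bmat : Matrix (Fin (B + 1)) (Fin (B + 1)) ℚ :=
    Matrix.of (fun j k : Fin (B + 1) =>
      ((((c + (k : ℕ)) : ℕ)! : ℚ) * (((a + (B - (k : ℕ))) : ℕ)! : ℚ))⁻¹ * Amat j k) with hB
  have hsplit : (Matrix.of fun j k : Fin (B + 1) =>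
      (chooseZ (a + c + (B - (j : ℕ))) ((c : ℤ) + (k : ℤ) - (j : ℤ)) : ℚ)) =
      Matrix.of fun j k : Fin (B + 1) =>
        ((((a + c + (B - (j : ℕ))) : ℕ)! : ℚ)) * Bmat j k := by
    ext j k
    simp only [hB, hA, Matrix.of_apply]
    rw [entry_formula]
    ring
  rw [hsplit, Matrix.det_mul_column _ Bmat]
  have hB2 : Bmat = Matrix.of fun j k : Fin (B + 1) =>
      ((((c + (k : ℕ)) : ℕ)! : ℚ) * (((a + (B - (k : ℕ))) : ℕ)! : ℚ))⁻¹ * Amat j k := hB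
  rw [hB2, Matrix.det_mul_row _ Amat]
  rw [hA, det_vdm]
  have e1 : ∏ j : Fin (B + 1), ((((a + c + (B - (j : ℕ))) : ℕ)! : ℚ)) =
      ∏ j ∈ range (B + 1), (((a + c + j) : ℕ)! : ℚ) := by
    rw [Fin.prod_univ_eq_prod_range (fun u => (((a + c + (B - u)) : ℕ)! : ℚ)) (B + 1)]
    rw [← Finset.prod_range_reflect]
    refine Finset.prod_congr rfl fun u hu => ?_
    rw [Finset.mem_range] at hu
    congr 2
    omega
  have e2 : ∏ k : Fin (B + 1),
      (((((c + (k : ℕ)) : ℕ)! : ℚ) * (((a + (B - (k : ℕ))) : ℕ)! : ℚ))⁻¹) =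
      (∏ k ∈ range (B + 1), ((((c + k) : ℕ)! : ℚ) * (((a + (B - k)) : ℕ)! : ℚ)))⁻¹ := by
    rw [Fin.prod_univ_eq_prod_range
      (fun u => ((((c + u) : ℕ)! : ℚ) * (((a + (B - u)) : ℕ)! : ℚ))⁻¹) (B + 1)]
    rw [← Finset.prod_inv_distrib]
  have e3 : ∏ k ∈ range (B + 1), ((((c + k) : ℕ)! : ℚ) * (((a + (B - k)) : ℕ)! : ℚ)) =
      (∏ k ∈ range (B + 1), ((((c + k) : ℕ)! : ℚ))) *
        ∏ k ∈ range (B + 1), ((((a + k) : ℕ)! : ℚ)) := by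
    rw [Finset.prod_mul_distrib]
    congr 1
    rw [← Finset.prod_range_reflect]
    refine Finset.prod_congr rfl fun u hu => ?_
    rw [Finset.mem_range] at hu
    congr 2
    omega
  rw [e1, e2, e3]
  have hne1 : (∏ k ∈ range (B + 1), ((((c + k) : ℕ)! : ℚ))) ≠ 0 :=
    Finset.prod_ne_zero_iff.2 fun k _ => by exact_mod_cast (Nat.factorial_ne_zero _)
  have hne2 : (∏ k ∈ range (B + 1), ((((a + k) : ℕ)! : ℚ))) ≠ 0 :=
    Finset.prod_ne_zero_iff.2 fun k _ => by exact_mod_cast (Nat.factorial_ne_zero _)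
  rw [Finset.prod_mul_distrib, Finset.prod_mul_distrib]
  push_cast
  field_simp

end MacMahonAux

/-- MacMahon's box formula: the number of plane partitions in an `a × b × c` box
(weakly decreasing functions `{1..a}×{1..b} → {0..c}`) satisfies
`card * H(a+b)H(a+c)H(b+c) = H(a)H(b)H(c)H(a+b+c)`. -/
theorem macmahon_box (a b c : ℕ) :
    Fintype.card {π : Fin a → Fin b → Fin (c + 1) //
        ∀ i i' j j', i ≤ i' → j ≤ j' → π i' j' ≤ π i j} *
      (hyperH (a + b) * hyperH (a + c) * hyperH (b + c)) =
    hyperH a * hyperH b * hyperH c * hyperH (a + b + c) := by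
  classical
  open MacMahonAux in
  have hcard : Fintype.card {π : Fin a → Fin b → Fin (c + 1) //
      ∀ i i' j j', i ≤ i' → j ≤ j' → π i' j' ≤ π i j} = cnt b (a + c) (Sv b c) (Ev b) := by
    rw [cnt_eq_card (a + c) (Sv b c) (Ev b) (strictAnti_Sv b c)]
    rw [← Nat.card_eq_fintype_card]
    exact Nat.card_congr (ppEquivProc a b c)
  have hdet := MacMahonAux.cnt_eq_det (b := b) (a + c) (MacMahonAux.Sv b c)
    (MacMahonAux.Ev b) (MacMahonAux.strictAnti_Sv b c) (MacMahonAux.strictAnti_Ev b)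
  have harg : ∀ j k : Fin b, MacMahonAux.Sv b c j - MacMahonAux.Ev b k
      = (c : ℤ) + (k : ℤ) - (j : ℤ) := by
    intro j k
    simp only [MacMahonAux.Sv, MacMahonAux.Ev]
    ring
  have hQdet : ((MacMahonAux.cnt b (a + c) (MacMahonAux.Sv b c) (MacMahonAux.Ev b) : ℕ) : ℚ)
      = Matrix.det (Matrix.of fun j k : Fin b =>
          (MacMahonAux.chooseZ (a + c) ((c : ℤ) + (k : ℤ) - (j : ℤ)) : ℚ)) := by
    have h1 : ((MacMahonAux.cnt b (a + c) (MacMahonAux.Sv b c) (MacMahonAux.Ev b) : ℕ) : ℚ)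
        = (Int.castRingHom ℚ)
            ((MacMahonAux.cnt b (a + c) (MacMahonAux.Sv b c) (MacMahonAux.Ev b) : ℤ)) := by
      simp
    rw [h1, hdet, RingHom.map_det]
    congr 1
    ext j k
    rw [RingHom.mapMatrix_apply]
    simp only [Matrix.map_apply, Matrix.of_apply, harg j k]
    simp
  have hNat : (MacMahonAux.cnt b (a + c) (MacMahonAux.Sv b c) (MacMahonAux.Ev b)) *
      ∏ k ∈ Finset.range b, (Nat.factorial (c + k) * Nat.factorial (a + k))
      = ∏ j ∈ Finset.range b, (Nat.factorial j * Nat.factorial (a + c + j)) := by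
    have hq := MacMahonAux.det_eval a c b
    rw [← hQdet] at hq
    exact_mod_cast hq
  rw [Finset.prod_mul_distrib, Finset.prod_mul_distrib] at hNat
  have h1 : hyperH (a + b) = hyperH a * ∏ j ∈ Finset.range b, Nat.factorial (a + j) :=
    MacMahonAux.hyperH_add a b
  have h2 : hyperH (b + c) = hyperH c * ∏ j ∈ Finset.range b, Nat.factorial (c + j) := by
    rw [Nat.add_comm b c]
    exact MacMahonAux.hyperH_add c b
  have h3 : hyperH (a + b + c)
      = hyperH (a + c) * ∏ j ∈ Finset.range b, Nat.factorial (a + c + j) := by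
    rw [show a + b + c = (a + c) + b by ring]
    exact MacMahonAux.hyperH_add (a + c) b
  have h4 : hyperH b = ∏ j ∈ Finset.range b, Nat.factorial j := by
    have h5 := MacMahonAux.hyperH_add 0 b
    simp only [Nat.zero_add] at h5
    rw [h5, show hyperH 0 = 1 from rfl]
    ring
  rw [hcard, h1, h2, h3, h4]
  calc MacMahonAux.cnt b (a + c) (MacMahonAux.Sv b c) (MacMahonAux.Ev b) *
        ((hyperH a * ∏ j ∈ Finset.range b, Nat.factorial (a + j)) * hyperH (a + c) *
          (hyperH c * ∏ j ∈ Finset.range b, Nat.factorial (c + j)))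
      = (MacMahonAux.cnt b (a + c) (MacMahonAux.Sv b c) (MacMahonAux.Ev b) *
          ((∏ k ∈ Finset.range b, Nat.factorial (c + k)) *
            ∏ k ∈ Finset.range b, Nat.factorial (a + k))) *
          (hyperH a * hyperH c * hyperH (a + c)) := by ring
    _ = ((∏ j ∈ Finset.range b, Nat.factorial j) *
          ∏ j ∈ Finset.range b, Nat.factorial (a + c + j)) *
          (hyperH a * hyperH c * hyperH (a + c)) := by rw [hNat]
    _ = hyperH a * (∏ j ∈ Finset.range b, Nat.factorial j) * hyperH c *
          (hyperH (a + c) * ∏ j ∈ Finset.range b, Nat.factorial (a + c + j)) := by ring
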